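/- Let A be a real n×n matrix and let x : ℝ → ℝⁿ and w : ℝ → ℝ be twice differentiable functions satisfying the geodesic system of the canonical connection in normal coordinates: x''(t) = w'(t) • (A · x'(t)) and w''(t) = 0 for all t. Then w' is constant and the function t ↦ x'(t) − w'(t) • (A · x(t)) is constant; i.e. the right-invariant one-forms dxⁱ − aⁱⱼ xʲ dw and dw yield first integrals of the geodesic flow. -/

import Mathlib

/-- First integrals of the geodesic system `ẍ = ẇ • (A ẋ)`, `ẅ = 0` of the canonical
connection in normal coordinates: `ẇ` is constant and `t ↦ ẋ(t) − ẇ(t) • (A · x(t))` is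
constant (the first integrals coming from the right-invariant one-forms
`dxⁱ − aⁱⱼ xʲ dw` and `dw`). -/
theorem geodesic_first_integrals {n : ℕ} (A : Matrix (Fin n) (Fin n) ℝ)
    (x : ℝ → Fin n → ℝ) (w : ℝ → ℝ)
    (hx : Differentiable ℝ x) (hx' : Differentiable ℝ (deriv x))
    (hw : Differentiable ℝ w) (hw' : Differentiable ℝ (deriv w))
    (hgeo : ∀ t : ℝ, deriv (deriv x) t = deriv w t • A.mulVec (deriv x t))
    (hgeow : ∀ t : ℝ, deriv (deriv w) t = 0) :
    (∀ t : ℝ, deriv w t = deriv w 0) ∧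
      (∀ t : ℝ, deriv x t - deriv w t • A.mulVec (x t)
        = deriv x 0 - deriv w 0 • A.mulVec (x 0)) := by
  constructor
  · intro t
    exact is_const_of_deriv_eq_zero hw' hgeow t 0
  · set L : (Fin n → ℝ) →L[ℝ] (Fin n → ℝ) := LinearMap.toContinuousLinearMap A.mulVecLin
      with hL
    have hLapp : ∀ v, L v = A.mulVec v := fun v => rfl
    have key : ∀ t, HasDerivAt (fun t => deriv x t - deriv w t • A.mulVec (x t)) 0 t := by
      intro t
      have h1 : HasDerivAt (deriv x) (deriv (deriv x) t) t := ((hx' t).hasDerivAt)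
      have h2 : HasDerivAt (deriv w) 0 t := by
        have h := (hw' t).hasDerivAt
        rwa [hgeow t] at h
      have h3 : HasDerivAt (fun s => L (x s)) (L (deriv x t)) t :=
        L.hasFDerivAt.comp_hasDerivAt t (hx t).hasDerivAt
      have h4 : HasDerivAt (fun s => deriv w s • L (x s))
          (deriv w t • L (deriv x t) + (0:ℝ) • L (x t)) t := h2.smul h3
      have h5 := h1.sub h4
      simp only [hLapp] at h5
      rw [hgeo t] at h5
      simp at h5
      exact h5
    intro t
    have hdiff : Differentiable ℝ (fun t => deriv x t - deriv w t • A.mulVec (x t)) :=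
      fun t => (key t).differentiableAt
    exact is_const_of_deriv_eq_zero hdiff (fun t => (key t).deriv) t 0
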